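/- For every polygon Γ in ℝ² (a finite union of line segments), there exists a set A ⊆ ℝ² of full Lebesgue measure (i.e., ℝ² \ A has measure zero) such that A + Γ has empty interior. -/

import Mathlib

open Pointwise

open MeasureTheory

lemma seg_null (a b : ℝ × ℝ) : volume (segment ℝ a b) = 0 := by
  have hsub : segment ℝ a b ⊆ (affineSpan ℝ {a, b} : Set (ℝ × ℝ)) := by
    rw [← convexHull_pair]
    exact convexHull_subset_affineSpan _
  have hne : affineSpan ℝ ({a, b} : Set (ℝ × ℝ)) ≠ ⊤ := by
    intro h
    have h1 : (affineSpan ℝ ({a, b} : Set (ℝ × ℝ))).direction = ⊤ := by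
      rw [h]; exact AffineSubspace.direction_top ℝ _ _
    rw [direction_affineSpan, vectorSpan_pair] at h1
    have h2 : Module.finrank ℝ (ℝ ∙ (a -ᵥ b)) ≤ 1 := by
      have := finrank_span_le_card (R := ℝ) ({a -ᵥ b} : Set (ℝ × ℝ))
      simpa using this
    rw [h1] at h2
    simp [finrank_top] at h2
  refine le_antisymm ?_ zero_le
  calc volume (segment ℝ a b) ≤ volume (affineSpan ℝ {a, b} : Set (ℝ × ℝ)) :=
        measure_mono hsub
    _ = 0 := Measure.addHaar_affineSubspace _ _ hne

theorem stmt_17 (n : ℕ) (p q : Fin n → ℝ × ℝ) :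
    ∃ A : Set (ℝ × ℝ), volume Aᶜ = 0 ∧
      interior (A + ⋃ i, segment ℝ (p i) (q i)) = ∅ := by
  obtain ⟨D, hDc, hDd⟩ := TopologicalSpace.exists_countable_dense (ℝ × ℝ)
  set Γ : Set (ℝ × ℝ) := ⋃ i, segment ℝ (p i) (q i) with hΓ
  have hΓ0 : volume Γ = 0 :=
    le_antisymm (le_trans (measure_iUnion_le _) (by simp [seg_null])) zero_le
  refine ⟨(⋃ d ∈ D, (fun x => d - x) ⁻¹' Γ)ᶜ, ?_, ?_⟩
  · rw [compl_compl]
    refine le_antisymm (le_trans (measure_biUnion_le volume hDc _) ?_) zero_le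
    have : ∀ d : ℝ × ℝ, volume ((fun x => d - x) ⁻¹' Γ) = 0 := fun d => by
      rw [(Measure.measurePreserving_sub_left volume d).measure_preimage (NullMeasurableSet.of_null hΓ0)]
      exact hΓ0
    simp [this]
  · have hsub : (⋃ d ∈ D, (fun x => d - x) ⁻¹' Γ)ᶜ + Γ ⊆ Dᶜ := by
      rintro x ⟨a, ha, g, hg, rfl⟩ hx
      exact ha (Set.mem_biUnion hx (by simpa using hg))
    have : interior Dᶜ = ∅ := by
      rw [interior_compl, hDd.closure_eq, Set.compl_univ]
    exact Set.eq_empty_of_subset_empty (this ▸ interior_mono hsub)
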